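/- Let φ be a growth function, q₀ ∈ (1,∞] with φ ∈ ℝℍ_{q₀}(ℝⁿ), a a (φ,∞)-atom associated with the ball B, and λ ∈ ℂ. Then ∫_{ℝⁿ} φ(x, 𝒜(λa)(x)) dx ≤ C φ(B, |λ|/‖χ_B‖_{L^φ(ℝⁿ)}) for a constant C independent of a, B, λ. -/

import Mathlib

open MeasureTheory Metric Filter ENNReal

noncomputable section

/-- `φ` is of uniformly lower type `p`. -/
def UnifLowerType {n : ℕ} (p : ℝ) (φ : EuclideanSpace ℝ (Fin n) → ℝ → ℝ) : Prop :=
  ∃ C : ℝ, 0 < C ∧ ∀ (x : EuclideanSpace ℝ (Fin n)) (s t : ℝ), 0 ≤ s → s ≤ 1 → 0 ≤ t →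
    φ x (s * t) ≤ C * s ^ p * φ x t

/-- `φ` is of uniformly upper type 1. -/
def UnifUpperType1 {n : ℕ} (φ : EuclideanSpace ℝ (Fin n) → ℝ → ℝ) : Prop :=
  ∃ C : ℝ, 0 < C ∧ ∀ (x : EuclideanSpace ℝ (Fin n)) (s t : ℝ), 1 ≤ s → 0 ≤ t →
    φ x (s * t) ≤ C * s * φ x t

/-- The uniform Muckenhoupt condition `𝔸_q(ℝⁿ)`. -/
def UniformMuckenhoupt {n : ℕ} (q : ℝ) (φ : EuclideanSpace ℝ (Fin n) → ℝ → ℝ) : Prop :=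
  if q = 1 then
    ∃ C : ℝ≥0∞, C ≠ ⊤ ∧ ∀ t : ℝ, 0 ≤ t → ∀ (x : EuclideanSpace ℝ (Fin n)) (r : ℝ), 0 < r →
      (∫⁻ y in ball x r, ENNReal.ofReal (φ y t)) *
        essSup (fun y => ENNReal.ofReal ((φ y t)⁻¹)) (volume.restrict (ball x r))
        ≤ C * volume (ball x r)
  else
    ∃ C : ℝ≥0∞, C ≠ ⊤ ∧ ∀ t : ℝ, 0 ≤ t → ∀ (x : EuclideanSpace ℝ (Fin n)) (r : ℝ), 0 < r →
      (∫⁻ y in ball x r, ENNReal.ofReal (φ y t)) *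
        ((∫⁻ y in ball x r, ENNReal.ofReal (φ y t) ^ (-(1 / (q - 1)))) ^ (q - 1))
        ≤ C * volume (ball x r) ^ q

/-- A growth function in the sense of Ky: `φ(x,·)` is an Orlicz function, `φ(·,t)` is
measurable, `φ` is of uniformly lower type `p` for some `p ∈ (0,1]` and of uniformly
upper type 1, and `φ ∈ 𝔸_∞(ℝⁿ)`. -/
def IsGrowthFunction {n : ℕ} (φ : EuclideanSpace ℝ (Fin n) → ℝ → ℝ) : Prop :=
  (∀ x, MonotoneOn (φ x) (Set.Ici 0)) ∧
  (∀ x, φ x 0 = 0) ∧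
  (∀ x t, 0 < t → 0 < φ x t) ∧
  (∀ x, Tendsto (φ x) atTop atTop) ∧
  (∀ t, Measurable fun x => φ x t) ∧
  (∃ p : ℝ, 0 < p ∧ p ≤ 1 ∧ UnifLowerType p φ) ∧
  UnifUpperType1 φ ∧
  (∃ q : ℝ, 1 ≤ q ∧ UniformMuckenhoupt q φ)

/-- The Luxembourg "norm" `‖χ_B‖_{L^φ}` of the characteristic function of a set `B`. -/
def luxNorm {n : ℕ} (φ : EuclideanSpace ℝ (Fin n) → ℝ → ℝ) (B : Set (EuclideanSpace ℝ (Fin n))) :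
    ℝ≥0∞ :=
  sInf {lam : ℝ≥0∞ | 0 < lam ∧ ∫⁻ x in B, ENNReal.ofReal (φ x lam⁻¹.toReal) ≤ 1}

/-- The Lusin square (area) functional `𝒜` over cones of aperture 1. -/
def sqFn {n : ℕ} (f : EuclideanSpace ℝ (Fin n) × ℝ → ℝ) (x : EuclideanSpace ℝ (Fin n)) : ℝ≥0∞ :=
  (∫⁻ p in {p : EuclideanSpace ℝ (Fin n) × ℝ | 0 < p.2 ∧ dist x p.1 < p.2},
      ENNReal.ofReal (f p ^ 2 / p.2 ^ (n + 1))) ^ ((1 : ℝ) / 2)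


/-- The uniform reverse Hölder condition `ℝℍ_q(ℝⁿ)`, for `q ∈ (1,∞]`. -/
def UniformReverseHolder {n : ℕ} (q : ℝ≥0∞) (φ : EuclideanSpace ℝ (Fin n) → ℝ → ℝ) : Prop :=
  if q = ⊤ then
    ∃ C : ℝ≥0∞, C ≠ ⊤ ∧ ∀ t : ℝ, 0 ≤ t → ∀ (x : EuclideanSpace ℝ (Fin n)) (r : ℝ), 0 < r →
      essSup (fun y => ENNReal.ofReal (φ y t)) (volume.restrict (ball x r))
        ≤ C * ((∫⁻ y in ball x r, ENNReal.ofReal (φ y t)) / volume (ball x r))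
  else
    ∃ C : ℝ≥0∞, C ≠ ⊤ ∧ ∀ t : ℝ, 0 ≤ t → ∀ (x : EuclideanSpace ℝ (Fin n)) (r : ℝ), 0 < r →
      ((∫⁻ y in ball x r, ENNReal.ofReal (φ y t) ^ q.toReal) / volume (ball x r)) ^ (1 / q.toReal)
        ≤ C * ((∫⁻ y in ball x r, ENNReal.ofReal (φ y t)) / volume (ball x r))

/-- The Lusin square functional for complex-valued functions on `ℝ^{n+1}_+`. -/
def sqFnC {n : ℕ} (f : EuclideanSpace ℝ (Fin n) × ℝ → ℂ) (x : EuclideanSpace ℝ (Fin n)) :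
    ℝ≥0∞ :=
  (∫⁻ p in {p : EuclideanSpace ℝ (Fin n) × ℝ | 0 < p.2 ∧ dist x p.1 < p.2},
      ENNReal.ofReal (‖f p‖ ^ 2 / p.2 ^ (n + 1))) ^ ((1 : ℝ) / 2)

/-- The tent over the ball `B(c,r)`. -/
def tent {n : ℕ} (c : EuclideanSpace ℝ (Fin n)) (r : ℝ) : Set (EuclideanSpace ℝ (Fin n) × ℝ) :=
  {p | 0 < p.2 ∧ p.2 ≤ Metric.infDist p.1 (ball c r)ᶜ}

/-- A `(φ,∞)`-atom associated with the ball `B(c,r)`. -/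
def IsTentAtomC {n : ℕ} (φ : EuclideanSpace ℝ (Fin n) → ℝ → ℝ)
    (a : EuclideanSpace ℝ (Fin n) × ℝ → ℂ) (c : EuclideanSpace ℝ (Fin n)) (r : ℝ) : Prop :=
  Function.support a ⊆ tent c r ∧
  ∀ p : ℝ, 1 < p →
    (∫⁻ x, sqFnC a x ^ p) ^ (1 / p) ≤
      ENNReal.ofReal ((volume (ball c r)).toReal ^ (1 / p)) / luxNorm φ (ball c r)

section Helpers

variable {n : ℕ}

lemma sqFnC_smul (a : EuclideanSpace ℝ (Fin n) × ℝ → ℂ) (lam : ℂ)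
    (x : EuclideanSpace ℝ (Fin n)) :
    sqFnC (fun p => lam * a p) x = ENNReal.ofReal (‖lam‖) * sqFnC a x := by
  unfold sqFnC
  have h1 : ∀ p : EuclideanSpace ℝ (Fin n) × ℝ,
      ENNReal.ofReal (‖lam * a p‖ ^ 2 / p.2 ^ (n + 1)) =
      ENNReal.ofReal (‖lam‖ ^ 2) * ENNReal.ofReal (‖a p‖ ^ 2 / p.2 ^ (n + 1)) := by
    intro p
    rw [← ENNReal.ofReal_mul (by positivity)]
    congr 1
    rw [norm_mul, mul_pow, mul_div_assoc]
  simp_rw [h1]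
  rw [lintegral_const_mul' _ _ ENNReal.ofReal_ne_top,
    ENNReal.mul_rpow_of_nonneg _ _ (by norm_num : (0:ℝ) ≤ 1/2)]
  congr 1
  rw [ENNReal.ofReal_pow (norm_nonneg lam), ← ENNReal.rpow_natCast _ 2,
    ← ENNReal.rpow_mul]
  norm_num

lemma sqFnC_measurable (a : EuclideanSpace ℝ (Fin n) × ℝ → ℂ) (ha : Measurable a) :
    Measurable (sqFnC a) := by
  unfold sqFnC
  apply Measurable.pow_const
  have hO : MeasurableSet {q : EuclideanSpace ℝ (Fin n) × (EuclideanSpace ℝ (Fin n) × ℝ) |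
      0 < q.2.2 ∧ dist q.1 q.2.1 < q.2.2} := by
    apply MeasurableSet.inter
    · exact measurableSet_lt measurable_const (measurable_snd.snd)
    · exact measurableSet_lt ((continuous_fst.dist (continuous_snd.fst)).measurable)
        (measurable_snd.snd)
  have hf : Measurable (fun p : EuclideanSpace ℝ (Fin n) × ℝ =>
      ENNReal.ofReal (‖a p‖ ^ 2 / p.2 ^ (n + 1))) := by
    apply Measurable.ennreal_ofReal
    exact ((ha.norm.pow_const 2).div (measurable_snd.pow_const (n+1)))
  have key : ∀ x : EuclideanSpace ℝ (Fin n),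
      (∫⁻ p in {p : EuclideanSpace ℝ (Fin n) × ℝ | 0 < p.2 ∧ dist x p.1 < p.2},
        ENNReal.ofReal (‖a p‖ ^ 2 / p.2 ^ (n + 1))) =
      ∫⁻ p, ({q : EuclideanSpace ℝ (Fin n) × (EuclideanSpace ℝ (Fin n) × ℝ) |
          0 < q.2.2 ∧ dist q.1 q.2.1 < q.2.2}.indicator
          (fun q => ENNReal.ofReal (‖a q.2‖ ^ 2 / q.2.2 ^ (n + 1)))) (x, p) := by
    intro x
    rw [← lintegral_indicator (f := fun q => ENNReal.ofReal (‖a q‖ ^ 2 / q.2 ^ (n + 1))) (by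
      apply MeasurableSet.inter
      · exact measurableSet_lt measurable_const measurable_snd
      · exact measurableSet_lt ((continuous_const.dist continuous_fst).measurable)
          measurable_snd)]
    refine lintegral_congr fun p => ?_
    by_cases hp : (0 < p.2 ∧ dist x p.1 < p.2) <;>
      simp [Set.indicator, hp]
  simp_rw [key]
  exact Measurable.lintegral_prod_right' ((hf.comp measurable_snd).indicator hO)

lemma sqFnC_zero_outside (a : EuclideanSpace ℝ (Fin n) × ℝ → ℂ)
    (c : EuclideanSpace ℝ (Fin n)) (r : ℝ)
    (hsupp : Function.support a ⊆ tent c r)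
    (x : EuclideanSpace ℝ (Fin n)) (hx : x ∉ ball c r) :
    sqFnC a x = 0 := by
  unfold sqFnC
  have h0 : (∫⁻ p in {p : EuclideanSpace ℝ (Fin n) × ℝ | 0 < p.2 ∧ dist x p.1 < p.2},
      ENNReal.ofReal (‖a p‖ ^ 2 / p.2 ^ (n + 1))) = 0 := by
    rw [setLIntegral_congr_fun (f := fun p => ENNReal.ofReal (‖a p‖ ^ 2 / p.2 ^ (n + 1)))
      (g := fun _ => 0)
      (by
        apply MeasurableSet.inter
        · exact measurableSet_lt measurable_const measurable_snd
        · exact measurableSet_lt ((continuous_const.dist continuous_fst).measurable)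
            measurable_snd)
      ?_, lintegral_zero]
    intro p hp
    by_cases hap : a p = 0
    · simp [hap]
    · exfalso
      have hpt : p ∈ tent c r := hsupp hap
      have h1 : Metric.infDist p.1 (ball c r)ᶜ ≤ dist p.1 x :=
        Metric.infDist_le_dist_of_mem hx
      have h2 : dist x p.1 < p.2 := hp.2
      have h3 : p.2 ≤ Metric.infDist p.1 (ball c r)ᶜ := hpt.2
      rw [dist_comm] at h1
      linarith
  rw [h0, ENNReal.zero_rpow_of_pos (by norm_num)]

end Helpers
lemma luxNorm_ne_zero {n : ℕ} (φ : EuclideanSpace ℝ (Fin n) → ℝ → ℝ)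
    (hmono : ∀ x, MonotoneOn (φ x) (Set.Ici 0))
    (htend : ∀ x, Tendsto (φ x) atTop atTop)
    (hmeas : ∀ t, Measurable fun x => φ x t)
    (c : EuclideanSpace ℝ (Fin n)) (r : ℝ) (hr : 0 < r) :
    luxNorm φ (ball c r) ≠ 0 := by
  intro h0
  -- every threshold M gives integral ≤ 1
  have key : ∀ M : ℝ, 0 ≤ M → ∫⁻ x in ball c r, ENNReal.ofReal (φ x M) ≤ 1 := by
    intro M hM
    have hε : (0:ℝ≥0∞) < (ENNReal.ofReal (M+1))⁻¹ :=
      ENNReal.inv_pos.mpr ENNReal.ofReal_ne_top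
    have : sInf {lam : ℝ≥0∞ | 0 < lam ∧
        ∫⁻ x in ball c r, ENNReal.ofReal (φ x lam⁻¹.toReal) ≤ 1} < (ENNReal.ofReal (M+1))⁻¹ := by
      rw [show sInf {lam : ℝ≥0∞ | 0 < lam ∧
        ∫⁻ x in ball c r, ENNReal.ofReal (φ x lam⁻¹.toReal) ≤ 1} = luxNorm φ (ball c r) from rfl,
        h0]
      exact hε
    obtain ⟨lam, ⟨hlam0, hlamint⟩, hlamlt⟩ := sInf_lt_iff.mp this
    have hlaminv : ENNReal.ofReal (M+1) < lam⁻¹ := by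
      exact ENNReal.lt_inv_iff_lt_inv.mpr hlamlt
    have hlaminv_ne_top : lam⁻¹ ≠ ⊤ := ENNReal.inv_ne_top.mpr hlam0.ne'
    have hMle : M ≤ lam⁻¹.toReal := by
      have := ENNReal.toReal_mono hlaminv_ne_top hlaminv.le
      rw [ENNReal.toReal_ofReal (by linarith)] at this
      linarith
    refine le_trans (lintegral_mono fun x => ?_) hlamint
    exact ENNReal.ofReal_le_ofReal (hmono x (Set.mem_Ici.mpr hM)
      (Set.mem_Ici.mpr (le_trans hM hMle)) hMle)
  -- monotone sequence of integrals bounded by 1, but sup is ⊤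
  have hmono' : Monotone (fun (k : ℕ) (x : EuclideanSpace ℝ (Fin n)) =>
      ENNReal.ofReal (φ x (k : ℝ))) := by
    intro k m hkm
    intro x
    exact ENNReal.ofReal_le_ofReal (hmono x (Set.mem_Ici.mpr (Nat.cast_nonneg k))
      (Set.mem_Ici.mpr (Nat.cast_nonneg m)) (Nat.cast_le.mpr hkm))
  have hsup : ∀ x, (⨆ k : ℕ, ENNReal.ofReal (φ x (k : ℝ))) = ⊤ := by
    intro x
    rw [eq_top_iff, ← ENNReal.iSup_natCast]
    refine iSup_le fun N => ?_
    obtain ⟨t₀, ht₀⟩ := (Filter.eventually_atTop).mp ((htend x).eventually_ge_atTop (N:ℝ))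
    refine le_trans ?_ (le_iSup _ (max ⌈t₀⌉₊ 1))
    have h1 : (N:ℝ) ≤ φ x ((max ⌈t₀⌉₊ 1 : ℕ) : ℝ) := by
      apply ht₀
      calc t₀ ≤ (⌈t₀⌉₊ : ℝ) := Nat.le_ceil t₀
      _ ≤ ((max ⌈t₀⌉₊ 1 : ℕ) : ℝ) := Nat.cast_le.mpr (le_max_left _ _)
    calc ((N:ℝ≥0∞)) = ENNReal.ofReal (N:ℝ) := (ENNReal.ofReal_natCast N).symm
    _ ≤ _ := ENNReal.ofReal_le_ofReal h1
  have := lintegral_iSup (μ := volume.restrict (ball c r))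
    (f := fun (k : ℕ) x => ENNReal.ofReal (φ x (k : ℝ)))
    (fun k => (hmeas (k:ℝ)).ennreal_ofReal) hmono'
  have hbound : (∫⁻ x in ball c r, ⨆ k : ℕ, ENNReal.ofReal (φ x (k : ℝ))) ≤ 1 := by
    rw [this]
    exact iSup_le fun k => key (k:ℝ) (Nat.cast_nonneg k)
  have htop : (∫⁻ x in ball c r, ⨆ k : ℕ, ENNReal.ofReal (φ x (k : ℝ))) = ⊤ := by
    have : (∫⁻ x in ball c r, ⨆ k : ℕ, ENNReal.ofReal (φ x (k : ℝ))) =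
        ∫⁻ _ in ball c r, (⊤:ℝ≥0∞) := lintegral_congr fun x => hsup x
    rw [this, setLIntegral_const, ENNReal.top_mul (measure_ball_pos _ _ hr).ne']
  rw [htop] at hbound
  exact absurd hbound (by simp)
lemma rh_key {n : ℕ} (φ : EuclideanSpace ℝ (Fin n) → ℝ → ℝ)
    (hmeas : ∀ t, Measurable fun x => φ x t)
    (q₀ : ℝ≥0∞) (hq₀ : 1 < q₀) (hRH : UniformReverseHolder q₀ φ) :
    ∃ C₂ : ℝ≥0∞, C₂ ≠ ⊤ ∧ ∀ (t : ℝ), 0 ≤ t → ∀ (c : EuclideanSpace ℝ (Fin n)) (r : ℝ), 0 < r →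
      ∀ (G : EuclideanSpace ℝ (Fin n) → ℝ≥0∞), Measurable G → ∀ (M : ℝ≥0∞), M ≠ 0 → M ≠ ⊤ →
      (∀ p : ℝ, 1 < p → (∫⁻ x, G x ^ p) ^ (1/p) ≤ volume (ball c r) ^ (1/p) / M) →
      (∫⁻ x in ball c r, ENNReal.ofReal (φ x t) * (M * G x)) ≤
        C₂ * ∫⁻ x in ball c r, ENNReal.ofReal (φ x t) := by
  by_cases hq : q₀ = ⊤
  · rw [UniformReverseHolder, if_pos hq] at hRH
    obtain ⟨C₂, hC₂top, hC₂⟩ := hRH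
    refine ⟨C₂, hC₂top, fun t ht c r hr G hG M hM0 hMt hatom => ?_⟩
    set V := volume (ball c r) with hV
    have hV0 : V ≠ 0 := (measure_ball_pos _ _ hr).ne'
    have hVt : V ≠ ⊤ := measure_ball_lt_top.ne
    set Φ : EuclideanSpace ℝ (Fin n) → ℝ≥0∞ := fun x => ENNReal.ofReal (φ x t) with hΦ
    set E := essSup Φ (volume.restrict (ball c r)) with hE
    have step1 : (∫⁻ x in ball c r, Φ x * (M * G x)) ≤ E * ∫⁻ x in ball c r, M * G x := by
      rw [← lintegral_const_mul E (f := fun x => M * G x) (measurable_const.mul hG)]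
      refine lintegral_mono_ae ?_
      filter_upwards [ENNReal.ae_le_essSup Φ] with x hx
      exact mul_le_mul_left hx _
    have step2 : (∫⁻ x in ball c r, M * G x) ≤ V := by
      rw [lintegral_const_mul M hG]
      have hold : (∫⁻ x in ball c r, G x) ≤
          (∫⁻ x in ball c r, G x ^ (2:ℝ)) ^ (1/(2:ℝ)) *
          (∫⁻ x in ball c r, (1:ℝ≥0∞) ^ (2:ℝ)) ^ (1/(2:ℝ)) := by
        have := ENNReal.lintegral_mul_le_Lp_mul_Lq (volume.restrict (ball c r))
          (p := 2) (q := 2) (by constructor <;> norm_num) hG.aemeasurable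
          aemeasurable_const (g := fun _ => (1:ℝ≥0∞))
        simpa using this
      have h1 : (∫⁻ x in ball c r, (1:ℝ≥0∞) ^ (2:ℝ)) ^ (1/(2:ℝ)) = V ^ (1/(2:ℝ)) := by
        simp [setLIntegral_const, hV]
      have h2 : (∫⁻ x in ball c r, G x ^ (2:ℝ)) ^ (1/(2:ℝ)) ≤ V ^ (1/(2:ℝ)) / M := by
        refine le_trans ?_ (hatom 2 one_lt_two)
        exact ENNReal.rpow_le_rpow (setLIntegral_le_lintegral _ _) (by norm_num)
      calc M * ∫⁻ x in ball c r, G x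
          ≤ M * ((V ^ (1/(2:ℝ)) / M) * V ^ (1/(2:ℝ))) := by
            rw [h1] at hold
            exact mul_le_mul_right (le_trans hold (mul_le_mul_left h2 _)) M
        _ = (M * (V ^ (1/(2:ℝ)) / M)) * V ^ (1/(2:ℝ)) := by ring
        _ = V ^ (1/(2:ℝ)) * V ^ (1/(2:ℝ)) := by rw [ENNReal.mul_div_cancel hM0 hMt]
        _ = V := by
            rw [← ENNReal.rpow_add _ _ hV0 hVt]
            norm_num
    have step3 : E ≤ C₂ * ((∫⁻ x in ball c r, Φ x) / V) := hC₂ t ht c r hr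
    calc (∫⁻ x in ball c r, Φ x * (M * G x)) ≤ E * V :=
          le_trans step1 (mul_le_mul_right step2 E)
      _ ≤ (C₂ * ((∫⁻ x in ball c r, Φ x) / V)) * V := mul_le_mul_left step3 V
      _ = C₂ * (((∫⁻ x in ball c r, Φ x) / V) * V) := by ring
      _ = C₂ * ∫⁻ x in ball c r, Φ x := by rw [ENNReal.div_mul_cancel hV0 hVt]
  · rw [UniformReverseHolder, if_neg hq] at hRH
    obtain ⟨C₂, hC₂top, hC₂⟩ := hRH
    refine ⟨C₂, hC₂top, fun t ht c r hr G hG M hM0 hMt hatom => ?_⟩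
    set V := volume (ball c r) with hV
    have hV0 : V ≠ 0 := (measure_ball_pos _ _ hr).ne'
    have hVt : V ≠ ⊤ := measure_ball_lt_top.ne
    set Φ : EuclideanSpace ℝ (Fin n) → ℝ≥0∞ := fun x => ENNReal.ofReal (φ x t) with hΦ
    set q : ℝ := q₀.toReal with hqdef
    have hq1 : 1 < q := by
      rw [hqdef, ← ENNReal.toReal_one]
      exact (ENNReal.toReal_lt_toReal ENNReal.one_ne_top hq).mpr hq₀
    set q' : ℝ := q / (q - 1) with hq'def
    have hconj : q.HolderConjugate q' := (Real.holderConjugate_iff_eq_conjExponent hq1).2 rfl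
    have hq'1 : 1 < q' := hconj.symm.lt
    have hq'0 : q' ≠ 0 := by positivity
    have hold : (∫⁻ x in ball c r, Φ x * (M * G x)) ≤
        (∫⁻ x in ball c r, Φ x ^ q) ^ (1/q) *
        (∫⁻ x in ball c r, (M * G x) ^ q') ^ (1/q') := by
      have := ENNReal.lintegral_mul_le_Lp_mul_Lq (volume.restrict (ball c r))
        hconj (f := Φ) (g := fun x => M * G x)
        ((hmeas t).ennreal_ofReal.aemeasurable) (measurable_const.mul hG).aemeasurable
      simpa using this
    have hsecond : (∫⁻ x in ball c r, (M * G x) ^ q') ^ (1/q') ≤ V ^ (1/q') := by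
      have h1 : (∫⁻ x in ball c r, (M * G x) ^ q') = M ^ q' * ∫⁻ x in ball c r, G x ^ q' := by
        simp_rw [ENNReal.mul_rpow_of_nonneg _ _ (by positivity : (0:ℝ) ≤ q')]
        exact lintegral_const_mul' _ _ (ENNReal.rpow_ne_top_of_nonneg (by positivity) hMt)
      rw [h1, ENNReal.mul_rpow_of_nonneg _ _ (by positivity : (0:ℝ) ≤ 1/q'),
        ← ENNReal.rpow_mul, mul_one_div, div_self hq'0, ENNReal.rpow_one]
      have h2 : (∫⁻ x in ball c r, G x ^ q') ^ (1/q') ≤ V ^ (1/q') / M := by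
        refine le_trans ?_ (hatom q' hq'1)
        exact ENNReal.rpow_le_rpow (setLIntegral_le_lintegral _ _) (by positivity)
      calc M * (∫⁻ x in ball c r, G x ^ q') ^ (1/q') ≤ M * (V ^ (1/q') / M) :=
            mul_le_mul_right h2 M
        _ = V ^ (1/q') := ENNReal.mul_div_cancel hM0 hMt
    have hfirst : (∫⁻ x in ball c r, Φ x ^ q) ^ (1/q) ≤
        (C₂ * ((∫⁻ x in ball c r, Φ x) / V)) * V ^ (1/q) := by
      have hRHa := hC₂ t ht c r hr
      have heq : (∫⁻ x in ball c r, Φ x ^ q) ^ (1/q) =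
          (((∫⁻ x in ball c r, Φ x ^ q) / V) ^ (1/q)) * V ^ (1/q) := by
        rw [← ENNReal.mul_rpow_of_nonneg _ _ (by positivity : (0:ℝ) ≤ 1/q),
          ENNReal.div_mul_cancel hV0 hVt]
      rw [heq]
      exact mul_le_mul_left hRHa _
    calc (∫⁻ x in ball c r, Φ x * (M * G x)) ≤
        ((C₂ * ((∫⁻ x in ball c r, Φ x) / V)) * V ^ (1/q)) * V ^ (1/q') :=
          le_trans hold (mul_le_mul hfirst hsecond zero_le zero_le)
      _ = (C₂ * ((∫⁻ x in ball c r, Φ x) / V)) * (V ^ (1/q) * V ^ (1/q')) := by ring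
      _ = (C₂ * ((∫⁻ x in ball c r, Φ x) / V)) * V := by
          rw [← ENNReal.rpow_add _ _ hV0 hVt]
          rw [show 1/q + 1/q' = 1 by
            have := hconj.inv_add_inv_eq_one
            rw [one_div, one_div]
            linarith]
          rw [ENNReal.rpow_one]
      _ = C₂ * (((∫⁻ x in ball c r, Φ x) / V) * V) := by ring
      _ = C₂ * ∫⁻ x in ball c r, Φ x := by rw [ENNReal.div_mul_cancel hV0 hVt]
/-- If `φ` is a growth function with `φ ∈ ℝℍ_{q₀}` for some `q₀ ∈ (1,∞]`,
then for every `(φ,∞)`-atom `a` associated with the ball `B` and every `λ ∈ ℂ`,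
`∫ φ(x, 𝒜(λa)(x)) dx ≤ C φ(B, |λ|/‖χ_B‖_{L^φ})`. -/
theorem stmt_14 {n : ℕ} (φ : EuclideanSpace ℝ (Fin n) → ℝ → ℝ)
    (hφ : IsGrowthFunction φ)
    (q₀ : ℝ≥0∞) (hq₀ : 1 < q₀) (hRH : UniformReverseHolder q₀ φ) :
    ∃ C : ℝ, 0 < C ∧
      ∀ (a : EuclideanSpace ℝ (Fin n) × ℝ → ℂ) (c : EuclideanSpace ℝ (Fin n)) (r : ℝ)
        (lam : ℂ), Measurable a → 0 < r → IsTentAtomC φ a c r →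
        ∫⁻ x, ENNReal.ofReal (φ x ((sqFnC (fun p => lam * a p) x).toReal)) ≤
          ENNReal.ofReal C *
            ∫⁻ x in ball c r,
              ENNReal.ofReal (φ x (‖lam‖ / (luxNorm φ (ball c r)).toReal)) := by
  obtain ⟨hmono, hzero, hpos, htend, hmeas, hlow, ⟨C₁, hC₁pos, hC₁⟩, hA⟩ := hφ
  obtain ⟨C₂, hC₂top, hC₂⟩ := rh_key φ hmeas q₀ hq₀ hRH
  set C1' : ℝ := max 1 C₁ with hC1'def
  have hC1'1 : (1:ℝ) ≤ C1' := le_max_left _ _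
  refine ⟨C1' * (1 + C₂.toReal), by positivity, fun a c r lam ha hr hatom => ?_⟩
  set B := ball c r with hB
  set L := luxNorm φ (ball c r) with hL
  have hGmeas : Measurable (sqFnC a) := sqFnC_measurable a ha
  have hL0 : L ≠ 0 := luxNorm_ne_zero φ hmono htend hmeas c r hr
  have hV0 : volume (ball c r) ≠ 0 := (measure_ball_pos _ _ hr).ne'
  have hVt : volume (ball c r) ≠ ⊤ := measure_ball_lt_top.ne
  by_cases hLt : L = ⊤
  · -- degenerate case: the atom is a.e. zero
    have hatom2 := hatom.2 2 one_lt_two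
    rw [← hL, hLt, ENNReal.div_top] at hatom2
    have hint0 : (∫⁻ x, sqFnC a x ^ (2:ℝ)) = 0 := by
      have h := le_antisymm hatom2 zero_le
      rcases ENNReal.rpow_eq_zero_iff.mp h with ⟨h1, _⟩ | ⟨_, h2⟩
      · exact h1
      · norm_num at h2
    have hae : ∀ᵐ x, sqFnC a x = 0 := by
      have := (lintegral_eq_zero_iff (hGmeas.pow_const (2:ℝ))).mp hint0
      filter_upwards [this] with x hx
      rcases ENNReal.rpow_eq_zero_iff.mp hx with ⟨h1, _⟩ | ⟨_, h2⟩
      · exact h1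
      · norm_num at h2
    have hLHS : (∫⁻ x, ENNReal.ofReal (φ x ((sqFnC (fun p => lam * a p) x).toReal))) = 0 := by
      rw [show (0:ℝ≥0∞) = ∫⁻ (_ : EuclideanSpace ℝ (Fin n)), 0 from (lintegral_zero).symm]
      refine lintegral_congr_ae ?_
      filter_upwards [hae] with x hx
      rw [sqFnC_smul, hx, mul_zero]
      simp [hzero x]
    rw [hLHS]
    exact zero_le
  · -- main case
    have hLr : 0 < L.toReal := ENNReal.toReal_pos hL0 hLt
    set t₀ : ℝ := ‖lam‖ / L.toReal with ht₀def
    have ht₀ : 0 ≤ t₀ := by positivity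
    set Φ : EuclideanSpace ℝ (Fin n) → ℝ≥0∞ := fun x => ENNReal.ofReal (φ x t₀) with hΦ
    have hΦmeas : Measurable Φ := (hmeas t₀).ennreal_ofReal
    have hatom' : ∀ p : ℝ, 1 < p →
        (∫⁻ x, sqFnC a x ^ p) ^ (1/p) ≤ volume (ball c r) ^ (1/p) / L := by
      intro p hp
      have h := hatom.2 p hp
      rwa [ENNReal.toReal_rpow,
        ENNReal.ofReal_toReal (ENNReal.rpow_ne_top_of_nonneg (by positivity) hVt), ← hL] at h
    have h_pt : ∀ x, ENNReal.ofReal (φ x ((sqFnC (fun p => lam * a p) x).toReal)) ≤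
        ENNReal.ofReal C1' * Φ x + ENNReal.ofReal C1' * (Φ x * (L * sqFnC a x)) := by
      intro x
      rw [sqFnC_smul, ENNReal.toReal_mul,
        ENNReal.toReal_ofReal (norm_nonneg lam)]
      set g : ℝ := (sqFnC a x).toReal with hgdef
      have hg : 0 ≤ g := ENNReal.toReal_nonneg
      have hkey : ‖lam‖ * g = (L.toReal * g) * t₀ := by
        rw [ht₀def]
        field_simp
      rw [hkey]
      set s : ℝ := L.toReal * g with hsdef
      have hs0 : 0 ≤ s := by positivity
      have hφt₀ : 0 ≤ φ x t₀ := by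
        rw [← hzero x]
        exact hmono x (Set.mem_Ici.mpr le_rfl) (Set.mem_Ici.mpr ht₀) ht₀
      have hofs : ENNReal.ofReal s ≤ L * sqFnC a x := by
        rw [hsdef, ENNReal.ofReal_mul ENNReal.toReal_nonneg, ENNReal.ofReal_toReal hLt]
        exact mul_le_mul_right ENNReal.ofReal_toReal_le L
      by_cases hs : s ≤ 1
      · have h1 : φ x (s * t₀) ≤ φ x t₀ :=
          hmono x (Set.mem_Ici.mpr (by positivity)) (Set.mem_Ici.mpr ht₀)
            (mul_le_of_le_one_left ht₀ hs)
        calc ENNReal.ofReal (φ x (s * t₀)) ≤ ENNReal.ofReal (φ x t₀) :=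
              ENNReal.ofReal_le_ofReal h1
          _ ≤ ENNReal.ofReal C1' * Φ x :=
              le_mul_of_one_le_left zero_le (ENNReal.one_le_ofReal.mpr hC1'1)
          _ ≤ _ := le_self_add
      · push_neg at hs
        have h1 : φ x (s * t₀) ≤ C1' * s * φ x t₀ := by
          refine le_trans (hC₁ x s t₀ hs.le ht₀) ?_
          have h2 : C₁ ≤ C1' := le_max_right _ _
          exact mul_le_mul_of_nonneg_right (mul_le_mul_of_nonneg_right h2 hs0) hφt₀
        calc ENNReal.ofReal (φ x (s * t₀)) ≤ ENNReal.ofReal (C1' * s * φ x t₀) :=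
              ENNReal.ofReal_le_ofReal h1
          _ = ENNReal.ofReal C1' * (ENNReal.ofReal s * Φ x) := by
              rw [mul_assoc, ENNReal.ofReal_mul (by linarith), ENNReal.ofReal_mul hs0]
          _ ≤ ENNReal.ofReal C1' * (Φ x * (L * sqFnC a x)) := by
              refine mul_le_mul_right ?_ _
              rw [mul_comm]
              exact mul_le_mul_right hofs _
          _ ≤ _ := le_add_self
    have hout : ∀ x, x ∉ B →
        ENNReal.ofReal (φ x ((sqFnC (fun p => lam * a p) x).toReal)) = 0 := by
      intro x hx
      rw [sqFnC_smul, sqFnC_zero_outside a c r hatom.1 x hx, mul_zero]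
      simp [hzero x]
    calc (∫⁻ x, ENNReal.ofReal (φ x ((sqFnC (fun p => lam * a p) x).toReal)))
        = ∫⁻ x, B.indicator
            (fun x => ENNReal.ofReal (φ x ((sqFnC (fun p => lam * a p) x).toReal))) x := by
          refine lintegral_congr fun x => ?_
          by_cases hx : x ∈ B
          · simp [Set.indicator, hx]
          · simp [Set.indicator, hx, hout x hx]
      _ = ∫⁻ x in B, ENNReal.ofReal (φ x ((sqFnC (fun p => lam * a p) x).toReal)) :=
          lintegral_indicator measurableSet_ball _
      _ ≤ ∫⁻ x in B, (ENNReal.ofReal C1' * Φ x + ENNReal.ofReal C1' * (Φ x * (L * sqFnC a x))) :=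
          lintegral_mono fun x => h_pt x
      _ = ENNReal.ofReal C1' * (∫⁻ x in B, Φ x) +
          ENNReal.ofReal C1' * ∫⁻ x in B, Φ x * (L * sqFnC a x) := by
          rw [lintegral_add_left (f := fun x => ENNReal.ofReal C1' * Φ x) (measurable_const.mul hΦmeas),
            lintegral_const_mul _ hΦmeas,
            lintegral_const_mul _ (f := fun x => Φ x * (L * sqFnC a x)) (hΦmeas.mul (measurable_const.mul hGmeas))]
      _ ≤ ENNReal.ofReal C1' * (∫⁻ x in B, Φ x) +
          ENNReal.ofReal C1' * (C₂ * ∫⁻ x in B, Φ x) := by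
          refine add_le_add_right (mul_le_mul_right ?_ _) _
          exact hC₂ t₀ ht₀ c r hr (sqFnC a) hGmeas L hL0 hLt hatom'
      _ = ENNReal.ofReal (C1' * (1 + C₂.toReal)) * ∫⁻ x in B, Φ x := by
          rw [ENNReal.ofReal_mul (by linarith),
            ENNReal.ofReal_add (by norm_num) ENNReal.toReal_nonneg,
            ENNReal.ofReal_one, ENNReal.ofReal_toReal hC₂top]
          ring
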